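/- Let ε, α, ω ∈ ℝ and let x, y, pₓ, p_y : ℝ → ℝ be differentiable functions satisfying Hamilton's equations of H_v: ẋ = p_y + (ε/2)x − (αε/6)x³, ẏ = pₓ − (ε/2)y + (αε/2)x²y, ṗₓ = −(ε/2)pₓ − (ω² − ε²/4)y − (αε/2)(2xy·p_y − x²pₓ) − (αε²/12)(12x²y − 5αx⁴y), ṗ_y = (ε/2)p_y − (ω² − ε²/4)x − (αε/2)x²p_y − (αε²/12)(4x³ − αx⁵), for all t ∈ ℝ. Then x and y are twice differentiable and satisfy the Van der Pol equation ẍ + ε(αx² − 1)ẋ + ω²x = 0 and the auxiliary Van der Pol equation ÿ − ε(αx² − 1)ẏ + ω²y = 0 for all t ∈ ℝ. -/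

import Mathlib

theorem vdp_hamilton_equations_give_vdp
    (ε α ω : ℝ) (x y px py : ℝ → ℝ)
    (hx : Differentiable ℝ x) (hy : Differentiable ℝ y)
    (hpx : Differentiable ℝ px) (hpy : Differentiable ℝ py)
    (h1 : ∀ t : ℝ, deriv x t = py t + ε / 2 * x t - α * ε / 6 * (x t) ^ 3)
    (h2 : ∀ t : ℝ, deriv y t = px t - ε / 2 * y t + α * ε / 2 * (x t) ^ 2 * y t)
    (h3 : ∀ t : ℝ, deriv px t = -(ε / 2) * px t - (ω ^ 2 - ε ^ 2 / 4) * y t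
      - α * ε / 2 * (2 * x t * y t * py t - (x t) ^ 2 * px t)
      - α * ε ^ 2 / 12 * (12 * (x t) ^ 2 * y t - 5 * α * (x t) ^ 4 * y t))
    (h4 : ∀ t : ℝ, deriv py t = ε / 2 * py t - (ω ^ 2 - ε ^ 2 / 4) * x t
      - α * ε / 2 * (x t) ^ 2 * py t
      - α * ε ^ 2 / 12 * (4 * (x t) ^ 3 - α * (x t) ^ 5)) :
    (Differentiable ℝ (deriv x) ∧ Differentiable ℝ (deriv y)) ∧
    (∀ t : ℝ, deriv (deriv x) t + ε * (α * (x t) ^ 2 - 1) * deriv x t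
      + ω ^ 2 * x t = 0) ∧
    (∀ t : ℝ, deriv (deriv y) t - ε * (α * (x t) ^ 2 - 1) * deriv y t
      + ω ^ 2 * y t = 0) := by
  have hEx : deriv x = fun t => py t + ε / 2 * x t - α * ε / 6 * (x t) ^ 3 :=
    funext h1
  have hEy : deriv y = fun t => px t - ε / 2 * y t + α * ε / 2 * (x t) ^ 2 * y t :=
    funext h2
  have hdx : Differentiable ℝ (deriv x) := by
    rw [hEx]
    exact (hpy.add ((differentiable_const _).mul hx)).sub
      ((differentiable_const _).mul (hx.pow 3))
  have hdy : Differentiable ℝ (deriv y) := by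
    rw [hEy]
    exact (hpx.sub ((differentiable_const _).mul hy)).add
      (((differentiable_const _).mul (hx.pow 2)).mul hy)
  have hDX : ∀ t : ℝ, deriv (deriv x) t =
      deriv py t + ε / 2 * deriv x t - α * ε / 6 * (3 * (x t) ^ 2 * deriv x t) := by
    intro t
    conv_lhs => rw [hEx]
    have h : HasDerivAt (fun t => py t + ε / 2 * x t - α * ε / 6 * (x t) ^ 3)
        (deriv py t + ε / 2 * deriv x t - α * ε / 6 * (3 * (x t) ^ 2 * deriv x t)) t := by
      have := (((hpy t).hasDerivAt.add
        (((hx t).hasDerivAt).const_mul (ε / 2))).sub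
        ((((hx t).hasDerivAt).pow 3).const_mul (α * ε / 6)))
      simpa [Pi.add_def, Pi.sub_def, mul_comm, mul_left_comm, mul_assoc] using this
    exact h.deriv
  have hDY : ∀ t : ℝ, deriv (deriv y) t =
      deriv px t - ε / 2 * deriv y t
        + α * ε / 2 * (2 * x t * deriv x t * y t + (x t) ^ 2 * deriv y t) := by
    intro t
    conv_lhs => rw [hEy]
    have h : HasDerivAt (fun t => px t - ε / 2 * y t + α * ε / 2 * (x t) ^ 2 * y t)
        (deriv px t - ε / 2 * deriv y t
          + α * ε / 2 * (2 * x t * deriv x t * y t + (x t) ^ 2 * deriv y t)) t := by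
      have hq : HasDerivAt (fun t => α * ε / 2 * (x t) ^ 2 * y t)
          (α * ε / 2 * (2 * x t * deriv x t * y t + (x t) ^ 2 * deriv y t)) t := by
        have := ((((hx t).hasDerivAt).pow 2).const_mul (α * ε / 2)).mul (hy t).hasDerivAt
        convert this using 1
        · rfl
        · rfl
        · rfl
        · rw [show (2:ℕ) - 1 = 1 from rfl]
          simp only [Pi.pow_apply, Nat.cast_ofNat, pow_one]
          ring
      have := (((hpx t).hasDerivAt.sub
        (((hy t).hasDerivAt).const_mul (ε / 2)))).add hq
      simpa [Pi.add_def, Pi.sub_def] using this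
    exact h.deriv
  refine ⟨⟨hdx, hdy⟩, ?_, ?_⟩
  · intro t
    rw [hDX t, h4 t, h1 t]
    ring
  · intro t
    rw [hDY t, h3 t, h2 t, h1 t]
    ring
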